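/- The function m ↦ sqrt(β² - m²)·arsinh(m/sqrt(β² - m²)) is strictly concave on (0, β) for every β > 0. -/

import Mathlib

open Real Set

private lemma diffuse_aux (β : ℝ) (hβ : 0 < β) {m : ℝ} (hm0 : 0 < m) (hmβ : m < β) :
    HasDerivAt (fun x => Real.sqrt (β ^ 2 - x ^ 2) * Real.arsinh (x / Real.sqrt (β ^ 2 - x ^ 2)))
      (β / Real.sqrt (β ^ 2 - m ^ 2)
        - m / Real.sqrt (β ^ 2 - m ^ 2) * Real.arsinh (m / Real.sqrt (β ^ 2 - m ^ 2))) m ∧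
    HasDerivAt (fun x => β / Real.sqrt (β ^ 2 - x ^ 2)
        - x / Real.sqrt (β ^ 2 - x ^ 2) * Real.arsinh (x / Real.sqrt (β ^ 2 - x ^ 2)))
      (-(β ^ 2 * Real.arsinh (m / Real.sqrt (β ^ 2 - m ^ 2)))
        / Real.sqrt (β ^ 2 - m ^ 2) ^ 3) m := by
  have hpos : 0 < β ^ 2 - m ^ 2 := by nlinarith
  set s := Real.sqrt (β ^ 2 - m ^ 2) with hsdef
  have hs : 0 < s := Real.sqrt_pos.2 hpos
  have hs2 : s ^ 2 = β ^ 2 - m ^ 2 := Real.sq_sqrt hpos.le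
  have hsqrt : HasDerivAt (fun x => Real.sqrt (β ^ 2 - x ^ 2)) (-m / s) m := by
    have h1 : HasDerivAt (fun x : ℝ => β ^ 2 - x ^ 2) (-(2 * m)) m := by
      simpa using (hasDerivAt_pow 2 m).const_sub (β ^ 2)
    have h2 := (Real.hasDerivAt_sqrt hpos.ne').comp m h1
    refine h2.congr_deriv ?_
    symm
    field_simp
    ring
  have hquot : HasDerivAt (fun x => x / Real.sqrt (β ^ 2 - x ^ 2)) (β ^ 2 / s ^ 3) m := by
    have h := (hasDerivAt_id m).div hsqrt hs.ne'
    refine h.congr_deriv ?_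
    symm
    simp only [← hsdef, id]
    rw [show β ^ 2 = s ^ 2 + m ^ 2 by linarith]
    field_simp
    ring
  have hss : Real.sqrt (1 + (m / s) ^ 2) = β / s := by
    have h1 : 1 + (m / s) ^ 2 = (β / s) ^ 2 := by
      field_simp
      nlinarith [hs2]
    rw [h1, Real.sqrt_sq (by positivity)]
  have ht : HasDerivAt (fun x => Real.arsinh (x / Real.sqrt (β ^ 2 - x ^ 2))) (β / s ^ 2) m := by
    have h := (Real.hasDerivAt_arsinh (m / s)).comp m hquot
    refine h.congr_deriv ?_
    symm
    rw [hss]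
    field_simp
  constructor
  · have h := hsqrt.mul ht
    refine h.congr_deriv ?_
    symm
    field_simp
    ring
  · have hA : HasDerivAt (fun x => β / Real.sqrt (β ^ 2 - x ^ 2)) (β * m / s ^ 3) m := by
      have h := (hasDerivAt_const m β).div hsqrt hs.ne'
      refine h.congr_deriv ?_
      symm
      simp only [← hsdef]
      field_simp
      ring
    have hB := hquot.mul ht
    have h := hA.sub hB
    refine h.congr_deriv ?_
    symm
    field_simp
    ring

/-- The lower bound `m ↦ √(β²-m²)·arsinh(m/√(β²-m²))` is strictly concave on
`(0, β)`. -/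
theorem diffuse_flux_bound_strictConcave (β : ℝ) (hβ : 0 < β) :
    StrictConcaveOn ℝ (Set.Ioo 0 β)
      (fun m => Real.sqrt (β ^ 2 - m ^ 2)
        * Real.arsinh (m / Real.sqrt (β ^ 2 - m ^ 2))) := by
  set f : ℝ → ℝ := fun m => Real.sqrt (β ^ 2 - m ^ 2)
      * Real.arsinh (m / Real.sqrt (β ^ 2 - m ^ 2)) with hf
  set g : ℝ → ℝ := fun x => β / Real.sqrt (β ^ 2 - x ^ 2)
      - x / Real.sqrt (β ^ 2 - x ^ 2) * Real.arsinh (x / Real.sqrt (β ^ 2 - x ^ 2)) with hg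
  apply strictConcaveOn_of_deriv2_neg (convex_Ioo 0 β)
  · intro x hx
    exact ((diffuse_aux β hβ hx.1 hx.2).1).continuousAt.continuousWithinAt
  · intro x hx
    rw [interior_Ioo] at hx
    have hderiv : deriv f =ᶠ[nhds x] g := by
      filter_upwards [isOpen_Ioo.mem_nhds hx] with y hy
      exact ((diffuse_aux β hβ hy.1 hy.2).1).deriv
    have h2 : deriv (deriv f) x = -(β ^ 2 * Real.arsinh (x / Real.sqrt (β ^ 2 - x ^ 2)))
        / Real.sqrt (β ^ 2 - x ^ 2) ^ 3 := by
      rw [hderiv.deriv_eq]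
      exact ((diffuse_aux β hβ hx.1 hx.2).2).deriv
    have h3 : deriv^[2] f x = deriv (deriv f) x := by
      simp [Function.iterate_succ, Function.iterate_zero]
    rw [h3, h2]
    have hpos : 0 < β ^ 2 - x ^ 2 := by nlinarith [hx.1, hx.2]
    have hs : 0 < Real.sqrt (β ^ 2 - x ^ 2) := Real.sqrt_pos.2 hpos
    have ha : 0 < Real.arsinh (x / Real.sqrt (β ^ 2 - x ^ 2)) :=
      Real.arsinh_pos_iff.2 (div_pos hx.1 hs)
    apply div_neg_of_neg_of_pos
    · nlinarith
    · positivity
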